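/- Let G be a finite connected simple graph whose set S(G) of simplicial vertices is partitioned into true twin equivalence classes C_1,…,C_k (vertices g,g' ∈ S(G) are in the same class if and only if N_G[g] = N_G[g']). If μt(G) = |S(G)|, then for any integer n ≥ 2, μt(G □ K_n) = Σ_{i=1}^{k} max{|C_i|, n}, where K_n is the complete graph on n vertices. -/

import Mathlib

open SimpleGraph

/-- `X` is a total mutual-visibility set of `G`: every two vertices of `G` are `X`-visible,
i.e. joined by a shortest path whose internal vertices avoid `X`. -/
def IsTMVSet {V : Type*} (G : SimpleGraph V) (X : Set V) : Prop :=
  ∀ x y : V, ∃ p : G.Walk x y, p.length = G.dist x y ∧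
    ∀ w ∈ p.support, w ≠ x → w ≠ y → w ∉ X

/-- The total mutual-visibility number of `G`. -/
noncomputable def muT {V : Type*} (G : SimpleGraph V) : ℕ :=
  sSup {n : ℕ | ∃ X : Set V, IsTMVSet G X ∧ X.ncard = n}

/-- `D` is a dominating set of `G`. -/
def IsDomSet {V : Type*} (G : SimpleGraph V) (D : Set V) : Prop :=
  ∀ v : V, v ∉ D → ∃ u ∈ D, G.Adj u v

/-- The domination number of `G`. -/
noncomputable def gammaDom {V : Type*} (G : SimpleGraph V) : ℕ :=
  sInf {n : ℕ | ∃ D : Set V, IsDomSet G D ∧ D.ncard = n}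

/-- `D` is a connected dominating set of `G`. -/
def IsConnDomSet {V : Type*} (G : SimpleGraph V) (D : Set V) : Prop :=
  IsDomSet G D ∧ (G.induce D).Connected

/-- The connected domination number of `G`. -/
noncomputable def gammaConnDom {V : Type*} (G : SimpleGraph V) : ℕ :=
  sInf {n : ℕ | ∃ D : Set V, IsConnDomSet G D ∧ D.ncard = n}

/-- The closed neighborhood of a vertex. -/
def closedNbhd {V : Type*} (G : SimpleGraph V) (v : V) : Set V :=
  insert v (G.neighborSet v)

/-- The set of simplicial vertices of `G`. -/
def simpSet {V : Type*} (G : SimpleGraph V) : Set V :=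
  {v | G.IsClique (G.neighborSet v)}

/-- The set `P(G)` of vertices that appear as the unique common closed neighbor of
two vertices. -/
def pSet {V : Type*} (G : SimpleGraph V) : Set V :=
  {v | ∃ u w : V, closedNbhd G u ∩ closedNbhd G w = {v}}

/-- The set `C(G)` of vertices belonging to every maximum total mutual-visibility set. -/
def compulsorySet {V : Type*} (G : SimpleGraph V) : Set V :=
  {v | ∀ X : Set V, IsTMVSet G X → X.ncard = muT G → v ∈ X}

/-- The set `F(G)` of vertices belonging to no maximum total mutual-visibility set. -/
def forbiddenSet {V : Type*} (G : SimpleGraph V) : Set V :=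
  {v | ∀ X : Set V, IsTMVSet G X → X.ncard = muT G → v ∉ X}

/-- The independent total mutual-visibility number of `G`. -/
noncomputable def muIT {V : Type*} (G : SimpleGraph V) : ℕ :=
  sSup {n : ℕ | ∃ X : Set V, IsTMVSet G X ∧ (∀ u ∈ X, ∀ v ∈ X, ¬ G.Adj u v) ∧ X.ncard = n}

/-- The join `G + H` of two graphs. -/
def joinGraph {V W : Type*} (G : SimpleGraph V) (H : SimpleGraph W) :
    SimpleGraph (V ⊕ W) :=
  SimpleGraph.fromRel (fun x y =>
    (∃ a b, x = Sum.inl a ∧ y = Sum.inl b ∧ G.Adj a b) ∨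
    (∃ a b, x = Sum.inr a ∧ y = Sum.inr b ∧ H.Adj a b) ∨
    (∃ a b, x = Sum.inl a ∧ y = Sum.inr b))

/-- The corona product `G ⊙ H`: a copy of `G` together with a copy `Hᵢ` of `H` for each
vertex `uᵢ` of `G`, where `uᵢ` is joined to all vertices of `Hᵢ`. -/
def coronaProd {V W : Type*} (G : SimpleGraph V) (H : SimpleGraph W) :
    SimpleGraph (V ⊕ V × W) :=
  SimpleGraph.fromRel (fun x y =>
    (∃ a b, x = Sum.inl a ∧ y = Sum.inl b ∧ G.Adj a b) ∨
    (∃ i w w', x = Sum.inr (i, w) ∧ y = Sum.inr (i, w') ∧ H.Adj w w') ∨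
    (∃ i w, x = Sum.inl i ∧ y = Sum.inr (i, w)))

/-- The lexicographic product `G ∘ H`. -/
def lexProd {V W : Type*} (G : SimpleGraph V) (H : SimpleGraph W) :
    SimpleGraph (V × W) where
  Adj x y := G.Adj x.1 y.1 ∨ (x.1 = y.1 ∧ H.Adj x.2 y.2)
  symm := ⟨fun x y h => by
    rcases h with h | ⟨h1, h2⟩
    · exact Or.inl h.symm
    · exact Or.inr ⟨h1.symm, h2.symm⟩⟩
  loopless := ⟨fun x h => by
    rcases h with h | ⟨_, h⟩
    · exact G.loopless.irrefl _ h
    · exact H.loopless.irrefl _ h⟩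

/-- `B` induces a 2-connected subgraph of `G`. -/
def IsTwoConnSet {V : Type*} (G : SimpleGraph V) (B : Set V) : Prop :=
  3 ≤ B.ncard ∧ (G.induce B).Connected ∧ ∀ v ∈ B, (G.induce (B \ {v})).Connected

section Aux
variable {V : Type*}

lemma simp_not_internal (G : SimpleGraph V) (hG : G.Connected) {x y : V} (p : G.Walk x y) :
    p.length = G.dist x y → ∀ w ∈ p.support, w ≠ x → w ≠ y → w ∉ simpSet G := by
  induction p with
  | nil =>
    intro _ w hw hwx _
    rw [Walk.support_nil, List.mem_singleton] at hw
    exact absurd hw hwx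
  | @cons x z y h p ih =>
    intro hp w hw hwx hwy
    rw [Walk.length_cons] at hp
    have hxz : G.dist x z ≤ 1 := by
      have := SimpleGraph.dist_le (Walk.cons h Walk.nil)
      simpa using this
    have htri := hG.dist_triangle (u := x) (v := z) (w := y)
    have hdzy : G.dist z y = p.length := by
      have h1 := SimpleGraph.dist_le p
      omega
    rw [Walk.support_cons, List.mem_cons] at hw
    rcases hw with rfl | hw
    · exact absurd rfl hwx
    by_cases hwz : w = z
    · subst hwz
      intro hsimp
      cases p with
      | nil => exact hwy rfl
      | @cons _ u _ h2 p2 =>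
        rw [Walk.length_cons] at hp hdzy
        by_cases hux : u = x
        · subst hux
          have := SimpleGraph.dist_le p2
          omega
        · have hadj : G.Adj x u := hsimp (by simpa using h.symm) (by simpa using h2)
            (Ne.symm hux)
          have := SimpleGraph.dist_le (Walk.cons hadj p2)
          rw [Walk.length_cons] at this
          omega
    · exact ih hdzy.symm w hw hwz hwy

lemma tmv_ncard_le_muT [Fintype V] (G : SimpleGraph V) {X : Set V} (hX : IsTMVSet G X) :
    X.ncard ≤ muT G := by
  apply le_csSup
  · refine ⟨Fintype.card V, ?_⟩
    rintro m ⟨Y, _, rfl⟩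
    calc Y.ncard ≤ (Set.univ : Set V).ncard :=
          Set.ncard_le_ncard (Set.subset_univ _) Set.finite_univ
      _ = Fintype.card V := by rw [Set.ncard_univ, Nat.card_eq_fintype_card]
  · exact ⟨X, hX, rfl⟩

lemma empty_tmv (G : SimpleGraph V) (hG : G.Connected) : IsTMVSet G (∅ : Set V) := by
  intro x y
  obtain ⟨p, hp⟩ := hG.exists_walk_length_eq_dist x y
  exact ⟨p, hp, by simp⟩

lemma exists_max_tmv [Fintype V] (G : SimpleGraph V) (hG : G.Connected) :
    ∃ X : Set V, IsTMVSet G X ∧ X.ncard = muT G := by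
  have hbdd : BddAbove {n : ℕ | ∃ X : Set V, IsTMVSet G X ∧ X.ncard = n} := by
    refine ⟨Fintype.card V, ?_⟩
    rintro m ⟨Y, _, rfl⟩
    calc Y.ncard ≤ (Set.univ : Set V).ncard :=
          Set.ncard_le_ncard (Set.subset_univ _) Set.finite_univ
      _ = Fintype.card V := by rw [Set.ncard_univ, Nat.card_eq_fintype_card]
  have hmem : (0:ℕ) ∈ {n : ℕ | ∃ X : Set V, IsTMVSet G X ∧ X.ncard = n} :=
    ⟨∅, empty_tmv G hG, by simp⟩
  exact Nat.sSup_mem ⟨0, hmem⟩ hbdd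

lemma tmv_subset_simpSet [Fintype V] (G : SimpleGraph V) (hG : G.Connected)
    (hmu : muT G = (simpSet G).ncard) {Y : Set V} (hY : IsTMVSet G Y) : Y ⊆ simpSet G := by
  have hYS : IsTMVSet G (Y ∪ simpSet G) := by
    intro x y
    obtain ⟨p, hl, hint⟩ := hY x y
    refine ⟨p, hl, fun w hw hx hy => ?_⟩
    rintro (hwY | hwS)
    · exact hint w hw hx hy hwY
    · exact simp_not_internal G hG p hl w hw hx hy hwS
  have h1 : (Y ∪ simpSet G).ncard ≤ (simpSet G).ncard := hmu ▸ tmv_ncard_le_muT G hYS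
  have h2 := Set.eq_of_subset_of_ncard_le Set.subset_union_right h1 (Set.toFinite _)
  intro v hv
  have hv2 : v ∈ Y ∪ simpSet G := Or.inl hv
  rwa [← h2] at hv2

lemma closed_subset (G : SimpleGraph V) {a b : V} (hab : G.Adj a b) (ha : a ∈ simpSet G) :
    closedNbhd G a ⊆ closedNbhd G b := by
  intro c hc
  rw [closedNbhd, Set.mem_insert_iff] at hc
  rw [closedNbhd, Set.mem_insert_iff]
  rcases hc with rfl | hc
  · exact Or.inr (by simpa using hab.symm)
  · by_cases hcb : c = b
    · exact Or.inl hcb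
    · refine Or.inr ?_
      have hbc : G.Adj b c := ha (by simpa using hab) hc (Ne.symm hcb)
      simpa using hbc

lemma adj_simp_twin (G : SimpleGraph V) {a b : V} (hab : G.Adj a b)
    (ha : a ∈ simpSet G) (hb : b ∈ simpSet G) : closedNbhd G a = closedNbhd G b :=
  Set.Subset.antisymm (closed_subset G hab ha) (closed_subset G hab.symm hb)

end Aux

section Box

variable {V : Type*} {n : ℕ}

lemma topConnFin (hn : 0 < n) : (⊤ : SimpleGraph (Fin n)).Connected := by
  have : Nonempty (Fin n) := ⟨⟨0, hn⟩⟩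
  exact connected_top

lemma layerAdj (G : SimpleGraph V) {a : V} {p q : Fin n} (h : p ≠ q) :
    (G □ (⊤ : SimpleGraph (Fin n))).Adj (a, p) (a, q) :=
  SimpleGraph.boxProd_adj.mpr (Or.inr ⟨h, rfl⟩)

lemma gAdj (G : SimpleGraph V) {a b : V} {t : Fin n} (h : G.Adj a b) :
    (G □ (⊤ : SimpleGraph (Fin n))).Adj (a, t) (b, t) :=
  SimpleGraph.boxProd_adj.mpr (Or.inl ⟨h, rfl⟩)

lemma lift_length (G : SimpleGraph V) {a b : V} (t : Fin n) (P : G.Walk a b) :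
    (P.boxProdLeft (⊤ : SimpleGraph (Fin n)) t).length = P.length := by
  show (Walk.map (SimpleGraph.boxProdLeft G (⊤ : SimpleGraph (Fin n)) t).toHom P).length
    = P.length
  rw [Walk.length_map]

lemma lift_support (G : SimpleGraph V) {a b : V} (t : Fin n) (P : G.Walk a b) :
    (P.boxProdLeft (⊤ : SimpleGraph (Fin n)) t).support
      = P.support.map (fun v => (v, t)) := by
  show (Walk.map (SimpleGraph.boxProdLeft G (⊤ : SimpleGraph (Fin n)) t).toHom P).support
    = P.support.map (fun v => (v, t))
  rw [Walk.support_map]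
  rfl

lemma walk_lb (G : SimpleGraph V) (hG : G.Connected) {x y : V × Fin n}
    (w : (G □ (⊤ : SimpleGraph (Fin n))).Walk x y) :
    G.dist x.1 y.1 + (if x.2 = y.2 then 0 else 1) ≤ w.length := by
  induction w with
  | nil => simp [SimpleGraph.dist_self]
  | @cons x z y h w ih =>
    rw [Walk.length_cons]
    rcases SimpleGraph.boxProd_adj.mp h with ⟨hadj, heq⟩ | ⟨_, heq⟩
    · have h2 : G.dist x.1 z.1 ≤ 1 := by
        have := SimpleGraph.dist_le (Walk.cons hadj Walk.nil)
        simpa using this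
      have h1 : G.dist x.1 y.1 ≤ G.dist z.1 y.1 + 1 := by
        have := hG.dist_triangle (u := x.1) (v := z.1) (w := y.1)
        omega
      rw [heq]
      set e := (if z.2 = y.2 then (0:ℕ) else 1) with he
      omega
    · have h2 : G.dist x.1 y.1 = G.dist z.1 y.1 := by rw [heq]
      have h3 : (if x.2 = y.2 then (0:ℕ) else 1) ≤ 1 := by split <;> omega
      have h4 : G.dist z.1 y.1 ≤ w.length := by
        have := ih
        split at this <;> omega
      omega

lemma stay_layer (G : SimpleGraph V) (hG : G.Connected) {x y : V × Fin n}
    (w : (G □ (⊤ : SimpleGraph (Fin n))).Walk x y) :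
    x.2 = y.2 → w.length ≤ G.dist x.1 y.1 →
    ∃ p : G.Walk x.1 y.1, p.length = w.length ∧
      w.support = p.support.map (fun v => (v, x.2)) := by
  induction w with
  | nil => intro _ _; exact ⟨Walk.nil, by simp, by simp⟩
  | @cons x z y h w ih =>
    intro hxy hlen
    rw [Walk.length_cons] at hlen
    rcases SimpleGraph.boxProd_adj.mp h with ⟨hadj, heq⟩ | ⟨hne, heq⟩
    · have hzy : z.2 = y.2 := heq ▸ hxy
      have hd1 : G.dist x.1 z.1 ≤ 1 := by
        have := SimpleGraph.dist_le (Walk.cons hadj Walk.nil)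
        simpa using this
      have h2 : w.length ≤ G.dist z.1 y.1 := by
        have := hG.dist_triangle (u := x.1) (v := z.1) (w := y.1)
        omega
      obtain ⟨p, hpl, hps⟩ := ih hzy h2
      refine ⟨Walk.cons hadj p, by simp [hpl], ?_⟩
      rw [Walk.support_cons, Walk.support_cons, List.map_cons, hps, heq, ← heq, Prod.mk.eta]
    · exfalso
      have hlb := walk_lb G hG w
      have hz2 : z.2 ≠ y.2 := fun hh => hne (hxy.trans hh.symm)
      rw [if_neg hz2, ← heq] at hlb
      omega

lemma box_dist (G : SimpleGraph V) (hG : G.Connected) (hn : 0 < n) (a b : V) (p q : Fin n) :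
    (G □ (⊤ : SimpleGraph (Fin n))).dist (a, p) (b, q)
      = G.dist a b + (if p = q then 0 else 1) := by
  have hH : (G □ (⊤ : SimpleGraph (Fin n))).Connected := hG.boxProd (topConnFin hn)
  apply le_antisymm
  · obtain ⟨P, hP⟩ := hG.exists_walk_length_eq_dist a b
    by_cases hpq : p = q
    · subst hpq
      rw [if_pos rfl, Nat.add_zero]
      have := SimpleGraph.dist_le (P.boxProdLeft (⊤ : SimpleGraph (Fin n)) p)
      rw [lift_length, hP] at this
      exact this
    · rw [if_neg hpq]
      have := SimpleGraph.dist_le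
        ((P.boxProdLeft (⊤ : SimpleGraph (Fin n)) p).append
          (Walk.cons (layerAdj G hpq) Walk.nil))
      rw [Walk.length_append, lift_length, hP, Walk.length_cons, Walk.length_nil] at this
      exact this
  · obtain ⟨W, hW⟩ := hH.exists_walk_length_eq_dist (a, p) (b, q)
    have := walk_lb G hG W
    rwa [hW] at this

lemma layer_tmv (G : SimpleGraph V) (hG : G.Connected) (hn : 0 < n)
    {X : Set (V × Fin n)} (hX : IsTMVSet (G □ (⊤ : SimpleGraph (Fin n))) X) (t : Fin n) :
    IsTMVSet G {g | (g, t) ∈ X} := by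
  intro a b
  obtain ⟨w, hlen, hav⟩ := hX (a, t) (b, t)
  rw [box_dist G hG hn, if_pos rfl, Nat.add_zero] at hlen
  obtain ⟨P, hPl, hPs⟩ := stay_layer G hG w rfl (le_of_eq hlen)
  refine ⟨P, by rw [hPl, hlen], fun v hv hva hvb hmem => ?_⟩
  have hsup : (v, t) ∈ w.support := by
    rw [hPs]; exact List.mem_map_of_mem hv
  exact hav (v, t) hsup (by simp [hva]) (by simp [hvb]) hmem

lemma star_lemma (G : SimpleGraph V) (hG : G.Connected) (hn : 0 < n)
    {X : Set (V × Fin n)} (hX : IsTMVSet (G □ (⊤ : SimpleGraph (Fin n))) X)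
    {a b : V} (hab : G.Adj a b) {p q : Fin n} (hpq : p ≠ q)
    (ha : (a, q) ∈ X) (hb : (b, p) ∈ X) : False := by
  obtain ⟨w, hlen, hav⟩ := hX (a, p) (b, q)
  rw [box_dist G hG hn, if_neg hpq, dist_eq_one_iff_adj.mpr hab] at hlen
  cases w with
  | nil => simp at hlen
  | @cons _ m _ h1 w1 =>
    cases w1 with
    | nil => simp at hlen
    | @cons _ c _ h2 w2 =>
      rw [Walk.length_cons, Walk.length_cons] at hlen
      have hw2 : w2.length = 0 := by omega
      have hc : c = (b, q) := Walk.eq_of_length_eq_zero hw2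
      subst hc
      have hm : m = (a, q) ∨ m = (b, p) := by
        obtain ⟨m1, m2⟩ := m
        rcases SimpleGraph.boxProd_adj.mp h1 with ⟨u1, u2⟩ | ⟨u1, u2⟩ <;>
          rcases SimpleGraph.boxProd_adj.mp h2 with ⟨v1, v2⟩ | ⟨v1, v2⟩
        · exact absurd (u2.trans v2) hpq
        · exact Or.inr (by rw [Prod.ext_iff]; exact ⟨v2, u2.symm⟩)
        · exact Or.inl (by rw [Prod.ext_iff]; exact ⟨u2.symm, v2⟩)
        · exact absurd (u2.trans v2) hab.ne
      have hne1 : m ≠ (a, p) := h1.ne'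
      have hne2 : m ≠ (b, q) := h2.ne
      rcases hm with rfl | rfl
      · exact hav _ (by simp) hne1 hne2 ha
      · exact hav _ (by simp) hne1 hne2 hb

end Box

lemma ncard_iUnion_eq {W : Type*} {k : ℕ} (A : Fin k → Set W) (hfin : ∀ i, (A i).Finite)
    (hdis : ∀ i j, i ≠ j → Disjoint (A i) (A j)) :
    (⋃ i, A i).ncard = ∑ i : Fin k, (A i).ncard := by
  classical
  have key : ∀ s : Finset (Fin k), (⋃ i ∈ s, A i).ncard = ∑ i ∈ s, (A i).ncard := by
    intro s
    induction s using Finset.induction_on with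
    | empty => simp
    | @insert a s ha ih =>
      have hd : Disjoint (A a) (⋃ i ∈ s, A i) := by
        simp only [Set.disjoint_iUnion_right]
        intro i hi
        exact hdis a i (fun h => ha (h ▸ hi))
      have hf : (⋃ i ∈ s, A i).Finite := Set.Finite.biUnion s.finite_toSet fun i _ => hfin i
      rw [Finset.set_biUnion_insert, Set.ncard_union_eq hd (hfin a) hf,
        Finset.sum_insert ha, ih]
  have h2 : (⋃ i, A i) = ⋃ i ∈ Finset.univ, A i := by simp
  rw [h2, key]

/-- If `μt(G) = |S(G)|` and `C₁, …, C_k` are the true twin equivalence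
classes of `S(G)`, then `μt(G □ Kₙ) = Σᵢ max{|Cᵢ|, n}` for every `n ≥ 2`. -/
theorem muT_boxProd_completeGraph {V : Type*} [Fintype V] (G : SimpleGraph V)
    (hG : G.Connected) (k : ℕ) (C : Fin k → Set V)
    (hne : ∀ i, (C i).Nonempty)
    (hdisj : ∀ i j, i ≠ j → Disjoint (C i) (C j))
    (hunion : (⋃ i, C i) = simpSet G)
    (htwin : ∀ g ∈ simpSet G, ∀ g' ∈ simpSet G,
      ((∃ i, g ∈ C i ∧ g' ∈ C i) ↔ closedNbhd G g = closedNbhd G g'))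
    (hmu : muT G = (simpSet G).ncard)
    (n : ℕ) (hn : 2 ≤ n) :
    muT (G □ (⊤ : SimpleGraph (Fin n))) = ∑ i : Fin k, max (C i).ncard n := by
  classical
  have hn0 : 0 < n := by omega
  have hH : (G □ (⊤ : SimpleGraph (Fin n))).Connected := hG.boxProd (topConnFin hn0)
  have hCsub : ∀ i, C i ⊆ simpSet G := by
    intro i x hx
    rw [← hunion]
    exact Set.mem_iUnion.mpr ⟨i, hx⟩
  have hClassEq : ∀ i j g, g ∈ C i → g ∈ C j → i = j := by
    intro i j g hi hj
    by_contra hne'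
    exact Set.disjoint_left.mp (hdisj i j hne') hi hj
  have hclassAdj : ∀ i, ∀ g ∈ C i, ∀ g' ∈ C i, g ≠ g' → G.Adj g g' := by
    intro i g hg g' hg' hgg
    have h := (htwin g (hCsub i hg) g' (hCsub i hg')).mp ⟨i, hg, hg'⟩
    have hmem : g' ∈ closedNbhd G g := by
      rw [h]
      exact Set.mem_insert _ _
    rw [closedNbhd, Set.mem_insert_iff] at hmem
    rcases hmem with h' | h'
    · exact absurd h'.symm hgg
    · exact (by simpa using h' : G.Adj g g')
  -- the lower-bound construction
  set t0 : Fin n := ⟨0, hn0⟩ with ht0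
  set gi : Fin k → V := fun i => (hne i).some with hgi
  have hgiC : ∀ i, gi i ∈ C i := fun i => (hne i).some_mem
  set Xc : Fin k → Set (V × Fin n) := fun i =>
    if n ≤ (C i).ncard then (C i) ×ˢ ({t0} : Set (Fin n))
    else ({gi i} : Set V) ×ˢ (Set.univ : Set (Fin n)) with hXc
  have hXcsub : ∀ i, Xc i ⊆ (C i) ×ˢ (Set.univ : Set (Fin n)) := by
    intro i z hz
    simp only [hXc] at hz
    by_cases hcase : n ≤ (C i).ncard
    · rw [if_pos hcase] at hz
      exact ⟨hz.1, Set.mem_univ _⟩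
    · rw [if_neg hcase] at hz
      refine ⟨?_, Set.mem_univ _⟩
      rw [show z.1 = gi i from hz.1]
      exact hgiC i
  set X0 : Set (V × Fin n) := ⋃ i, Xc i with hX0
  have hX0fst : ∀ z ∈ X0, ∃ i, z ∈ Xc i ∧ z.1 ∈ C i := by
    intro z hz
    rw [hX0] at hz
    obtain ⟨i, hi⟩ := Set.mem_iUnion.mp hz
    exact ⟨i, hi, (hXcsub i hi).1⟩
  have hX0simp : ∀ z ∈ X0, z.1 ∈ simpSet G := by
    intro z hz
    obtain ⟨i, _, h⟩ := hX0fst z hz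
    exact hCsub i h
  have hblock : ∀ a b (p q : Fin n), G.Adj a b → p ≠ q →
      (a, q) ∈ X0 → (b, p) ∈ X0 → False := by
    intro a b p q hab hpq ha hb
    obtain ⟨i, hai, haC⟩ := hX0fst _ ha
    obtain ⟨j, hbj, hbC⟩ := hX0fst _ hb
    obtain ⟨i', ha', hb'⟩ := (htwin a (hCsub i haC) b (hCsub j hbC)).mpr
      (adj_simp_twin G hab (hCsub i haC) (hCsub j hbC))
    have hij : i = j := (hClassEq i i' a haC ha').trans (hClassEq j i' b hbC hb').symm
    subst hij
    simp only [hXc] at hai hbj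
    by_cases hcase : n ≤ (C i).ncard
    · rw [if_pos hcase] at hai hbj
      have h1 : q = t0 := Set.mem_singleton_iff.mp hai.2
      have h2 : p = t0 := Set.mem_singleton_iff.mp hbj.2
      exact hpq (h2.trans h1.symm)
    · rw [if_neg hcase] at hai hbj
      have h1 : a = gi i := Set.mem_singleton_iff.mp hai.1
      have h2 : b = gi i := Set.mem_singleton_iff.mp hbj.1
      exact hab.ne (h1.trans h2.symm)
  have hX0tmv : IsTMVSet (G □ (⊤ : SimpleGraph (Fin n))) X0 := by
    rintro ⟨a, p⟩ ⟨b, q⟩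
    by_cases hpq : p = q
    · subst hpq
      obtain ⟨P0, hP0⟩ := hG.exists_walk_length_eq_dist a b
      refine ⟨P0.boxProdLeft (⊤ : SimpleGraph (Fin n)) p, ?_, ?_⟩
      · rw [lift_length, hP0, box_dist G hG hn0, if_pos rfl, Nat.add_zero]
      · intro z hz hz1 hz2 hzX
        rw [lift_support] at hz
        obtain ⟨v, hv, rfl⟩ := List.mem_map.mp hz
        have hvS : v ∈ simpSet G := hX0simp _ hzX
        exact simp_not_internal G hG P0 hP0 v hv
          (fun h => hz1 (by rw [h])) (fun h => hz2 (by rw [h])) hvS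
    · rcases eq_or_ne a b with rfl | hab
      · refine ⟨Walk.cons (layerAdj G hpq) Walk.nil, ?_, ?_⟩
        · rw [Walk.length_cons, Walk.length_nil, box_dist G hG hn0, if_neg hpq,
            SimpleGraph.dist_self]
        · intro z hz hz1 hz2
          simp only [Walk.support_cons, Walk.support_nil, List.mem_cons,
            List.mem_singleton, List.not_mem_nil, or_false] at hz
          rcases hz with rfl | rfl
          · exact absurd rfl hz1
          · exact absurd rfl hz2
      · have hd1 : G.dist a b ≠ 0 := fun h => hab (hG.dist_eq_zero_iff.mp h)
        by_cases hd2 : G.dist a b = 1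
        · have hab' : G.Adj a b := dist_eq_one_iff_adj.mp hd2
          by_cases haq : (a, q) ∈ X0
          · have hbp : (b, p) ∉ X0 := fun hbp => hblock a b p q hab' hpq haq hbp
            refine ⟨Walk.cons (gAdj G hab') (Walk.cons (layerAdj G hpq) Walk.nil), ?_, ?_⟩
            · rw [Walk.length_cons, Walk.length_cons, Walk.length_nil,
                box_dist G hG hn0, if_neg hpq, hd2]
            · intro z hz hz1 hz2
              simp only [Walk.support_cons, Walk.support_nil, List.mem_cons,
                List.mem_singleton, List.not_mem_nil, or_false] at hz
              rcases hz with rfl | rfl | rfl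
              · exact absurd rfl hz1
              · exact hbp
              · exact absurd rfl hz2
          · refine ⟨Walk.cons (layerAdj G hpq) (Walk.cons (gAdj G hab') Walk.nil),
              ?_, ?_⟩
            · rw [Walk.length_cons, Walk.length_cons, Walk.length_nil,
                box_dist G hG hn0, if_neg hpq, hd2]
            · intro z hz hz1 hz2
              simp only [Walk.support_cons, Walk.support_nil, List.mem_cons,
                List.mem_singleton, List.not_mem_nil, or_false] at hz
              rcases hz with rfl | rfl | rfl
              · exact absurd rfl hz1
              · exact haq
              · exact absurd rfl hz2
        · have hd : 2 ≤ G.dist a b := by omega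
          obtain ⟨P0, hP0⟩ := hG.exists_walk_length_eq_dist a b
          obtain ⟨P, hPl, hPp⟩ : ∃ P : G.Walk a b, P.length = G.dist a b ∧ P.IsPath :=
            ⟨P0.bypass, le_antisymm (le_trans (Walk.length_bypass_le _) (le_of_eq hP0))
              (SimpleGraph.dist_le _), P0.bypass_isPath⟩
          cases P with
          | nil => rw [Walk.length_nil] at hPl; omega
          | @cons _ c _ h1 P' =>
            have hcb : c ≠ b := by
              intro h
              subst h
              have := SimpleGraph.dist_le (Walk.cons h1 Walk.nil)
              simp only [Walk.length_cons, Walk.length_nil] at this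
              omega
            have hcS : c ∉ simpSet G :=
              simp_not_internal G hG (Walk.cons h1 P') hPl c
                (by rw [Walk.support_cons]; exact List.mem_cons_of_mem _ P'.start_mem_support)
                h1.ne' hcb
            have haP' : a ∉ P'.support := ((Walk.cons_isPath_iff h1 P').mp hPp).2
            have hPl' : P'.length + 1 = G.dist a b := by
              rw [← hPl, Walk.length_cons]
            refine ⟨Walk.cons (gAdj G h1) (Walk.cons (layerAdj G hpq) (P'.boxProdLeft (⊤ : SimpleGraph (Fin n)) q)),
              ?_, ?_⟩
            · rw [Walk.length_cons, Walk.length_cons, lift_length,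
                box_dist G hG hn0, if_neg hpq]
              omega
            · intro z hz hz1 hz2
              simp only [Walk.support_cons] at hz
              rw [lift_support] at hz
              rcases List.mem_cons.mp hz with rfl | hz'
              · exact absurd rfl hz1
              rcases List.mem_cons.mp hz' with rfl | hz''
              · exact fun hzX => hcS (hX0simp _ hzX)
              · obtain ⟨v, hv, rfl⟩ := List.mem_map.mp hz''
                intro hzX
                have hvb : v ≠ b := fun h => hz2 (by rw [h])
                have hva : v ≠ a := fun h => haP' (h ▸ hv)
                exact simp_not_internal G hG (Walk.cons h1 P') hPl v
                  (by rw [Walk.support_cons]; exact List.mem_cons_of_mem _ hv) hva hvb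
                  (hX0simp _ hzX)
  have hXcdisj : ∀ i j, i ≠ j → Disjoint (Xc i) (Xc j) := by
    intro i j hij
    exact Set.disjoint_left.mpr fun z hzi hzj =>
      Set.disjoint_left.mp (hdisj i j hij) (hXcsub i hzi).1 (hXcsub j hzj).1
  have hXccard : ∀ i, (Xc i).ncard = max (C i).ncard n := by
    intro i
    simp only [hXc]
    by_cases hcase : n ≤ (C i).ncard
    · rw [if_pos hcase, Set.prod_singleton,
        Set.ncard_image_of_injective _ (fun u v huv => (congrArg Prod.fst huv : u = v))]
      exact (max_eq_left hcase).symm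
    · rw [if_neg hcase, Set.singleton_prod,
        Set.ncard_image_of_injective _ (fun u v huv => (congrArg Prod.snd huv : u = v)),
        Set.ncard_univ, Nat.card_eq_fintype_card, Fintype.card_fin]
      exact (max_eq_right (le_of_not_ge hcase)).symm
  have hX0card : X0.ncard = ∑ i : Fin k, max (C i).ncard n := by
    rw [hX0, ncard_iUnion_eq Xc (fun i => Set.toFinite _) hXcdisj]
    exact Finset.sum_congr rfl fun i _ => hXccard i
  apply le_antisymm
  · obtain ⟨X, hX, hXcard⟩ := exists_max_tmv _ hH
    rw [← hXcard]
    have hXsub : ∀ z ∈ X, z.1 ∈ simpSet G := by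
      intro z hz
      have h1 : IsTMVSet G {g | (g, z.2) ∈ X} := layer_tmv G hG hn0 hX z.2
      have h2 := tmv_subset_simpSet G hG hmu h1
      exact h2 (by rw [Set.mem_setOf_eq, Prod.mk.eta]; exact hz)
    set A : Fin k → Set (V × Fin n) := fun i => X ∩ ((C i) ×ˢ (Set.univ : Set (Fin n)))
      with hA
    have hXA : X ⊆ ⋃ i, A i := by
      intro z hz
      have h1 := hXsub z hz
      rw [← hunion] at h1
      obtain ⟨i, hi⟩ := Set.mem_iUnion.mp h1
      exact Set.mem_iUnion.mpr ⟨i, hz, hi, Set.mem_univ _⟩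
    have hAdisj : ∀ i j, i ≠ j → Disjoint (A i) (A j) := fun i j hij =>
      Set.disjoint_left.mpr fun z hzi hzj =>
        Set.disjoint_left.mp (hdisj i j hij) hzi.2.1 hzj.2.1
    calc X.ncard ≤ (⋃ i, A i).ncard := Set.ncard_le_ncard hXA (Set.toFinite _)
      _ = ∑ i : Fin k, (A i).ncard := ncard_iUnion_eq A (fun _ => Set.toFinite _) hAdisj
      _ ≤ ∑ i : Fin k, max (C i).ncard n := by
          refine Finset.sum_le_sum fun i _ => ?_
          by_cases hcase : ∀ z ∈ A i, ∀ z' ∈ A i, z.1 = z'.1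
          · rcases Set.eq_empty_or_nonempty (A i) with he | ⟨z0, hz0⟩
            · rw [he]
              simp
            · have hsub : A i ⊆ ({z0.1} : Set V) ×ˢ (Set.univ : Set (Fin n)) := by
                intro z hz
                exact ⟨(hcase z hz z0 hz0 : z.1 = z0.1), Set.mem_univ _⟩
              calc (A i).ncard ≤ (({z0.1} : Set V) ×ˢ (Set.univ : Set (Fin n))).ncard :=
                    Set.ncard_le_ncard hsub (Set.toFinite _)
                _ = n := by
                    rw [Set.singleton_prod,
                      Set.ncard_image_of_injective _
                        (fun u v huv => (congrArg Prod.snd huv : u = v)),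
                      Set.ncard_univ, Nat.card_eq_fintype_card, Fintype.card_fin]
                _ ≤ max (C i).ncard n := le_max_right _ _
          · push_neg at hcase
            obtain ⟨z, hz, z', hz', hzz⟩ := hcase
            have hinj : Set.InjOn Prod.fst (A i) := by
              intro w hw w' hw' heq
              by_contra hne2
              have hsnd : w.2 ≠ w'.2 := fun h => hne2 (Prod.ext heq h)
              have hwit : ∃ y ∈ A i, y.1 ≠ w.1 := by
                rcases eq_or_ne z.1 w.1 with h | h
                · exact ⟨z', hz', fun hh => hzz (h.trans hh.symm)⟩
                · exact ⟨z, hz, h⟩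
              obtain ⟨y, hy, hy1⟩ := hwit
              have hadj : G.Adj w.1 y.1 := hclassAdj i _ hw.2.1 _ hy.2.1
                (fun h => hy1 h.symm)
              have hyX : (y.1, y.2) ∈ X := by rw [Prod.mk.eta]; exact hy.1
              rcases eq_or_ne w.2 y.2 with h | h
              · have hq : y.2 ≠ w'.2 := fun hh => hsnd (h.trans hh)
                have hwX : (w.1, w'.2) ∈ X := by
                  rw [heq, Prod.mk.eta]
                  exact hw'.1
                exact star_lemma G hG hn0 hX hadj hq hwX hyX
              · have hwX : (w.1, w.2) ∈ X := by rw [Prod.mk.eta]; exact hw.1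
                exact star_lemma G hG hn0 hX hadj (Ne.symm h) hwX hyX
            calc (A i).ncard = (Prod.fst '' A i).ncard :=
                  (Set.ncard_image_of_injOn hinj).symm
              _ ≤ (C i).ncard := Set.ncard_le_ncard
                  (by rintro _ ⟨w, hw, rfl⟩; exact hw.2.1) (Set.toFinite _)
              _ ≤ max (C i).ncard n := le_max_left _ _
  · rw [← hX0card]
    exact tmv_ncard_le_muT _ hX0tmv
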